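/- Pseudo-Poincaré inequality: for a finitely generated group G with finite symmetric generating set S* containing the identity and word length |·|, for every y ∈ G, every p ≥ 1, and every finitely supported f: G → ℝ, one has Σ_x |f(xy) − f(x)|^p ≤ |S*|·|y|^p · Σ_{x,z} |f(xz) − f(x)|^p u(z), where u is the uniform probability measure on S*. -/

import Mathlib

open scoped BigOperators

/-- Word length with respect to a finite symmetric generating set `S`. -/
noncomputable def wordLength {G : Type*} [Group G] (S : Finset G) (g : G) : ℕ :=
  sInf {n : ℕ | ∃ l : List G, (∀ x ∈ l, x ∈ S) ∧ l.length = n ∧ l.prod = g}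

/-- The uniform probability measure on the finite symmetric generating set `S`. -/
noncomputable def unifS {G : Type*} [Group G] [DecidableEq G] (S : Finset G) : G → ℝ :=
  fun y => if y ∈ S then ((S.card : ℝ))⁻¹ else 0

/-- Convexity: `(∑ |a i|)^p ≤ n^(p-1) * ∑ |a i|^p`. -/
lemma sum_abs_rpow_le {n : ℕ} (hn : 0 < n) (a : ℕ → ℝ) {p : ℝ} (hp : 1 ≤ p) :
    (∑ i ∈ Finset.range n, |a i|) ^ p ≤
      (n : ℝ) ^ (p - 1) * ∑ i ∈ Finset.range n, |a i| ^ p := by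
  have hn0 : (0 : ℝ) < (n : ℝ) := by exact_mod_cast hn
  have key := Real.rpow_arith_mean_le_arith_mean_rpow (Finset.range n)
    (fun _ => (n : ℝ)⁻¹) (fun i => |a i|)
    (fun i _ => by positivity)
    (by simp [Finset.sum_const, Finset.card_range]; field_simp)
    (fun i _ => abs_nonneg _) hp
  have hs : (0 : ℝ) ≤ ∑ i ∈ Finset.range n, |a i| :=
    Finset.sum_nonneg fun i _ => abs_nonneg _
  rw [← Finset.mul_sum, ← Finset.mul_sum, Real.mul_rpow (by positivity) hs] at key
  have h2 : ((n : ℝ)⁻¹) ^ p = ((n : ℝ) ^ p)⁻¹ := Real.inv_rpow hn0.le p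
  rw [h2] at key
  have hnp : (0 : ℝ) < (n : ℝ) ^ p := Real.rpow_pos_of_pos hn0 p
  -- multiply key by n^p
  have key2 : (∑ i ∈ Finset.range n, |a i|) ^ p ≤
      (n : ℝ) ^ p * ((n : ℝ)⁻¹ * ∑ i ∈ Finset.range n, |a i| ^ p) := by
    calc (∑ i ∈ Finset.range n, |a i|) ^ p
        = (n : ℝ) ^ p * (((n : ℝ) ^ p)⁻¹ * (∑ i ∈ Finset.range n, |a i|) ^ p) := by
          field_simp
      _ ≤ (n : ℝ) ^ p * ((n : ℝ)⁻¹ * ∑ i ∈ Finset.range n, |a i| ^ p) := by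
          exact mul_le_mul_of_nonneg_left key hnp.le
  have h3 : (n : ℝ) ^ p * (n : ℝ)⁻¹ = (n : ℝ) ^ (p - 1) := by
    rw [Real.rpow_sub hn0, Real.rpow_one]
    ring
  calc (∑ i ∈ Finset.range n, |a i|) ^ p
      ≤ (n : ℝ) ^ p * ((n : ℝ)⁻¹ * ∑ i ∈ Finset.range n, |a i| ^ p) := key2
    _ = (n : ℝ) ^ (p - 1) * ∑ i ∈ Finset.range n, |a i| ^ p := by rw [← mul_assoc, h3]

/-- Pseudo-Poincaré inequality: for every `y ∈ G`, `p ≥ 1` and finitely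
supported `f : G → ℝ`,
`Σ_x |f(xy) - f(x)|^p ≤ |S|·|y|^p · Σ_{x,z} |f(xz) - f(x)|^p u(z)`,
where `u` is uniform on the finite symmetric generating set `S` containing `1`. -/
theorem pseudo_poincare {G : Type*} [Group G] [DecidableEq G]
    (S : Finset G) (hone : (1 : G) ∈ S) (hsym : ∀ s ∈ S, s⁻¹ ∈ S)
    (hgen : Subgroup.closure (S : Set G) = ⊤)
    (y : G) (p : ℝ) (hp : 1 ≤ p)
    (f : G → ℝ) (hfin : (Function.support f).Finite) :
    (∑' x : G, |f (x * y) - f x| ^ p) ≤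
      (S.card : ℝ) * ((wordLength S y : ℝ)) ^ p *
        ∑' x : G, ∑' z : G, |f (x * z) - f x| ^ p * unifS S z := by
  classical
  have hp0 : p ≠ 0 := by positivity
  have hp0' : (0 : ℝ) ≤ p := by positivity
  set F : Finset G := hfin.toFinset with hF
  -- summability of the basic shifted-difference functions
  have hvanish : ∀ g : G, ∀ x : G, x ∉ F ∪ F.image (· * g⁻¹) →
      |f (x * g) - f x| ^ p = 0 := by
    intro g x hx
    rw [Finset.mem_union, not_or] at hx
    have h1 : f x = 0 := by
      by_contra h
      exact hx.1 (by simp [hF, Set.Finite.mem_toFinset, Function.mem_support, h])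
    have h2 : f (x * g) = 0 := by
      by_contra h
      apply hx.2
      rw [Finset.mem_image]
      exact ⟨x * g, by simp [hF, Set.Finite.mem_toFinset, Function.mem_support, h], by
        group⟩
    simp [h1, h2, Real.zero_rpow hp0]
  have hsum : ∀ g : G, Summable (fun x => |f (x * g) - f x| ^ p) := fun g =>
    summable_of_ne_finset_zero (hvanish g)
  set T : G → ℝ := fun g => ∑' x : G, |f (x * g) - f x| ^ p with hT
  have hTnonneg : ∀ g, 0 ≤ T g := fun g =>
    tsum_nonneg fun x => Real.rpow_nonneg (abs_nonneg _) p
  -- translation invariance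
  have htrans : ∀ (a g : G), (∑' x : G, |f (x * a * g) - f (x * a)| ^ p) = T g := by
    intro a g
    exact (Equiv.mulRight a).tsum_eq (fun x => |f (x * g) - f x| ^ p)
  -- simplify the RHS
  have hcard : (0 : ℝ) < (S.card : ℝ) := by
    exact_mod_cast Finset.card_pos.mpr ⟨1, hone⟩
  have hRHS : (∑' x : G, ∑' z : G, |f (x * z) - f x| ^ p * unifS S z)
      = (S.card : ℝ)⁻¹ * ∑ z ∈ S, T z := by
    have hinner : ∀ x : G, (∑' z : G, |f (x * z) - f x| ^ p * unifS S z)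
        = ∑ z ∈ S, |f (x * z) - f x| ^ p * (S.card : ℝ)⁻¹ := by
      intro x
      rw [tsum_eq_sum (s := S) (fun z hz => by simp [unifS, hz])]
      exact Finset.sum_congr rfl fun z hz => by simp [unifS, hz]
    calc (∑' x : G, ∑' z : G, |f (x * z) - f x| ^ p * unifS S z)
        = ∑' x : G, ∑ z ∈ S, |f (x * z) - f x| ^ p * (S.card : ℝ)⁻¹ := by
          exact tsum_congr hinner
      _ = ∑ z ∈ S, ∑' x : G, |f (x * z) - f x| ^ p * (S.card : ℝ)⁻¹ := by
          exact Summable.tsum_finsetSum fun z _ => (hsum z).mul_right _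
      _ = ∑ z ∈ S, T z * (S.card : ℝ)⁻¹ := by
          exact Finset.sum_congr rfl fun z _ => tsum_mul_right
      _ = (S.card : ℝ)⁻¹ * ∑ z ∈ S, T z := by
          rw [← Finset.sum_mul]; ring
  rw [hRHS]
  have hgoal_rw : (S.card : ℝ) * ((wordLength S y : ℝ)) ^ p *
      ((S.card : ℝ)⁻¹ * ∑ z ∈ S, T z)
      = ((wordLength S y : ℝ)) ^ p * ∑ z ∈ S, T z := by
    field_simp
  rw [hgoal_rw]
  -- existence of a geodesic word
  have hex : ∃ l : List G, (∀ x ∈ l, x ∈ S) ∧ l.prod = y := by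
    have hy : y ∈ Subgroup.closure (S : Set G) := by rw [hgen]; trivial
    refine Subgroup.closure_induction ?_ ?_ ?_ ?_ hy
    · intro x hx; exact ⟨[x], by simpa using hx, by simp⟩
    · exact ⟨[], by simp, by simp⟩
    · rintro x z _ _ ⟨l1, hl1, hp1⟩ ⟨l2, hl2, hp2⟩
      exact ⟨l1 ++ l2, by
        intro w hw
        rcases List.mem_append.mp hw with h | h
        · exact hl1 w h
        · exact hl2 w h, by rw [List.prod_append, hp1, hp2]⟩
    · rintro x _ ⟨l, hl, hpl⟩
      refine ⟨(l.map (·⁻¹)).reverse, ?_, ?_⟩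
      · intro w hw
        rw [List.mem_reverse, List.mem_map] at hw
        obtain ⟨v, hv, rfl⟩ := hw
        exact hsym v (hl v hv)
      · rw [List.prod_reverse_noncomm, List.map_map]
        simp only [Function.comp_def, inv_inv, List.map_id']
        rw [hpl]
  have hne : {n : ℕ | ∃ l : List G, (∀ x ∈ l, x ∈ S) ∧ l.length = n ∧ l.prod = y}.Nonempty := by
    obtain ⟨l, hl1, hl2⟩ := hex
    exact ⟨l.length, l, hl1, rfl, hl2⟩
  obtain ⟨l, hlS, hlen, hprod⟩ : ∃ l : List G, (∀ x ∈ l, x ∈ S) ∧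
      l.length = wordLength S y ∧ l.prod = y := Nat.sInf_mem hne
  set n := wordLength S y with hn
  rcases Nat.eq_zero_or_pos n with hn0 | hnpos
  · -- n = 0: y = 1, LHS = 0
    have hy1 : y = 1 := by
      rw [← hprod]
      have : l = [] := List.length_eq_zero_iff.mp (by rw [hlen, ← hn0])
      simp [this]
    have hLHS : (∑' x : G, |f (x * y) - f x| ^ p) = 0 := by
      have : ∀ x : G, |f (x * y) - f x| ^ p = 0 := by
        intro x; simp [hy1, Real.zero_rpow hp0]
      simp [this]
    rw [hLHS, hn0]
    have : ((0 : ℕ) : ℝ) ^ p = 0 := by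
      rw [Nat.cast_zero, Real.zero_rpow hp0]
    rw [this, zero_mul]
  · -- main case
    have hnR : (0 : ℝ) < (n : ℝ) := by exact_mod_cast hnpos
    -- pointwise estimate
    have hpt : ∀ x : G, |f (x * y) - f x| ^ p ≤
        (n : ℝ) ^ (p - 1) * ∑ i ∈ Finset.range n,
          |f (x * (l.take (i + 1)).prod) - f (x * (l.take i).prod)| ^ p := by
      intro x
      set a : ℕ → ℝ := fun i => f (x * (l.take (i + 1)).prod) - f (x * (l.take i).prod)
        with ha
      have htel : ∑ i ∈ Finset.range n, a i = f (x * y) - f x := by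
        have := Finset.sum_range_sub (fun i => f (x * (l.take i).prod)) n
        rw [ha]
        rw [this]
        congr 1
        · rw [← hlen, List.take_length, hprod]
        · simp
      have h1 : |f (x * y) - f x| ≤ ∑ i ∈ Finset.range n, |a i| := by
        rw [← htel]; exact Finset.abs_sum_le_sum_abs a (Finset.range n)
      calc |f (x * y) - f x| ^ p
          ≤ (∑ i ∈ Finset.range n, |a i|) ^ p :=
            Real.rpow_le_rpow (abs_nonneg _) h1 hp0'
        _ ≤ (n : ℝ) ^ (p - 1) * ∑ i ∈ Finset.range n, |a i| ^ p :=
            sum_abs_rpow_le hnpos a hp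
    -- summability of the RHS pointwise bound
    have hsum2 : ∀ i ∈ Finset.range n, Summable (fun x : G =>
        |f (x * (l.take (i + 1)).prod) - f (x * (l.take i).prod)| ^ p) := by
      intro i hi
      have hi' : i < l.length := by rw [hlen]; exact Finset.mem_range.mp hi
      have heq : ∀ x : G, x * (l.take (i + 1)).prod
          = (x * (l.take i).prod) * l[i] := by
        intro x; rw [List.prod_take_succ l i hi', mul_assoc]
      have : (fun x : G => |f (x * (l.take (i + 1)).prod) - f (x * (l.take i).prod)| ^ p)
          = fun x : G => |f ((x * (l.take i).prod) * l[i]) - f (x * (l.take i).prod)| ^ p := by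
        funext x; rw [heq]
      rw [this]
      exact ((Equiv.mulRight (l.take i).prod).summable_iff
        (f := fun x => |f (x * l[i]) - f x| ^ p)).mpr (hsum l[i])
    -- sum over x
    have hstep : (∑' x : G, |f (x * y) - f x| ^ p) ≤
        (n : ℝ) ^ (p - 1) * ∑ i ∈ Finset.range n,
          ∑' x : G, |f (x * (l.take (i + 1)).prod) - f (x * (l.take i).prod)| ^ p := by
      have hsumR : Summable (fun x : G => (n : ℝ) ^ (p - 1) * ∑ i ∈ Finset.range n,
          |f (x * (l.take (i + 1)).prod) - f (x * (l.take i).prod)| ^ p) := by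
        exact ((summable_sum (fun i hi => hsum2 i hi)).mul_left _)
      calc (∑' x : G, |f (x * y) - f x| ^ p)
          ≤ ∑' x : G, (n : ℝ) ^ (p - 1) * ∑ i ∈ Finset.range n,
              |f (x * (l.take (i + 1)).prod) - f (x * (l.take i).prod)| ^ p :=
            Summable.tsum_le_tsum hpt (hsum y) hsumR
        _ = (n : ℝ) ^ (p - 1) * ∑' x : G, ∑ i ∈ Finset.range n,
              |f (x * (l.take (i + 1)).prod) - f (x * (l.take i).prod)| ^ p :=
            tsum_mul_left
        _ = (n : ℝ) ^ (p - 1) * ∑ i ∈ Finset.range n,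
              ∑' x : G, |f (x * (l.take (i + 1)).prod) - f (x * (l.take i).prod)| ^ p := by
            rw [Summable.tsum_finsetSum (fun i hi => hsum2 i hi)]
    -- identify each inner tsum with T of a generator and bound by the sum over S
    have hbound : ∀ i ∈ Finset.range n,
        (∑' x : G, |f (x * (l.take (i + 1)).prod) - f (x * (l.take i).prod)| ^ p)
          ≤ ∑ z ∈ S, T z := by
      intro i hi
      have hi' : i < l.length := by rw [hlen]; exact Finset.mem_range.mp hi
      have heq : (∑' x : G, |f (x * (l.take (i + 1)).prod) - f (x * (l.take i).prod)| ^ p)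
          = T l[i] := by
        have h1 : (fun x : G => |f (x * (l.take (i + 1)).prod) - f (x * (l.take i).prod)| ^ p)
            = fun x : G =>
              |f ((x * (l.take i).prod) * l[i]) - f (x * (l.take i).prod)| ^ p := by
          funext x; rw [List.prod_take_succ l i hi', mul_assoc]
        rw [h1]
        exact htrans (l.take i).prod l[i]
      rw [heq]
      exact Finset.single_le_sum (fun z _ => hTnonneg z) (hlS l[i] (List.getElem_mem hi'))
    have hfinal : (∑' x : G, |f (x * y) - f x| ^ p) ≤
        (n : ℝ) ^ (p - 1) * (n * ∑ z ∈ S, T z) := by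
      refine hstep.trans ?_
      have : ∑ i ∈ Finset.range n,
          (∑' x : G, |f (x * (l.take (i + 1)).prod) - f (x * (l.take i).prod)| ^ p)
          ≤ ∑ i ∈ Finset.range n, ∑ z ∈ S, T z :=
        Finset.sum_le_sum hbound
      rw [Finset.sum_const, Finset.card_range, nsmul_eq_mul] at this
      exact mul_le_mul_of_nonneg_left this (Real.rpow_nonneg hnR.le _)
    refine hfinal.trans_eq ?_
    rw [← mul_assoc]
    congr 1
    rw [Real.rpow_sub hnR, Real.rpow_one]
    field_simp
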